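/- Let v_{i-1}, v_i, v_{i+1} be real numbers with a = v_i - v_{i-1} > 0 and b = v_{i+1} - v_i ≥ 0 (monotonically increasing data). For μ ∈ ℝ define the left-interface value Q(μ) = μ·(v_i + v_{i-1})/2 + (1-μ)·(3v_i - v_{i+1})/2. If -3b ≤ μ·(a - b) ≤ 2a - b, then v_{i-1} ≤ Q(μ) ≤ v_{i+1}. -/
import Mathlib

theorem stmt_4 (vm v vp μ : ℝ)
    (ha : 0 < v - vm) (hb : 0 ≤ vp - v)
    (h1 : -(3 * (vp - v)) ≤ μ * ((v - vm) - (vp - v)))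
    (h2 : μ * ((v - vm) - (vp - v)) ≤ 2 * (v - vm) - (vp - v)) :
    vm ≤ μ * (v + vm) / 2 + (1 - μ) * (3 * v - vp) / 2 ∧
      μ * (v + vm) / 2 + (1 - μ) * (3 * v - vp) / 2 ≤ vp := by
  constructor <;> nlinarith [h1, h2]
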